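/- Let λ ∈ Γ_k^+ with S_k(λ)/S_l(λ) = C(n,k)/C(n,l), 0 ≤ l < k ≤ n. Define M := C(n,l)(n−k)S_k(λ) − C(n,k)(n−l)S_l(λ) and Q := C(n,l)(k+1)S_{k+1}(λ) − C(n,k)(l+1)S_{l+1}(λ). Then M < 0 and M − Q ≥ 0. -/

import Mathlib

/-- `S_k(λ)`: the `k`-th elementary symmetric polynomial of `λ ∈ ℝ^n` (with `S_0 = 1`). -/
def Sv {n : ℕ} (k : ℕ) (lam : Fin n → ℝ) : ℝ :=
  ∑ s ∈ Finset.univ.powersetCard k, ∏ i ∈ s, lam i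

open Polynomial Finset

lemma Sv_esymm {n : ℕ} (k : ℕ) (lam : Fin n → ℝ) :
    Sv k lam = (Finset.univ.val.map lam).esymm k := by
  rw [Finset.esymm_map_val]; rfl

lemma Sv_zero {n : ℕ} (lam : Fin n → ℝ) : Sv 0 lam = 1 := by
  simp [Sv]

lemma Sv_top {n : ℕ} (lam : Fin n → ℝ) : Sv n lam = ∏ i, lam i := by
  have h : (Finset.univ : Finset (Fin n)).powersetCard n = {Finset.univ} := by
    simpa using Finset.powersetCard_self (Finset.univ : Finset (Fin n))
  rw [Sv, h, Finset.sum_singleton]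

lemma Sv_one {n : ℕ} (lam : Fin n → ℝ) : Sv 1 lam = ∑ i, lam i := by
  rw [Sv, Finset.powersetCard_one, Finset.sum_map]
  simp

lemma Sv_eq_zero {n k : ℕ} (h : n < k) (lam : Fin n → ℝ) : Sv k lam = 0 := by
  rw [Sv, Finset.powersetCard_eq_empty.2 (by simpa using h), Finset.sum_empty]

lemma step_aux (s : Multiset ℝ) (n : ℕ) (hs : Multiset.card s = n + 1) :
    ∃ t : Multiset ℝ, Multiset.card t = n ∧
      ∀ r : ℕ, r ≤ n → ((n : ℝ) + 1) * t.esymm r = ((n : ℝ) + 1 - r) * s.esymm r := by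
  classical
  set P : ℝ[X] := ((s.map Neg.neg).map fun a => X - C a).prod with hP
  have hroots : P.roots = s.map Neg.neg := roots_multiset_prod_X_sub_C _
  have hdeg : P.natDegree = n + 1 := by
    rw [hP, natDegree_multiset_prod_X_sub_C_eq_card, Multiset.card_map, hs]
  have hmonic : P.Monic := by
    apply monic_multiset_prod_of_monic
    intro a _
    exact monic_X_sub_C a
  have hcoeff : ∀ k : ℕ, k ≤ n + 1 → P.coeff k = s.esymm (n + 1 - k) := by
    intro k hk
    have hk' : k ≤ Multiset.card (s.map Neg.neg) := by rwa [Multiset.card_map, hs]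
    rw [hP, Multiset.prod_X_sub_C_coeff _ hk', Multiset.card_map, hs,
      Multiset.esymm_neg, ← mul_assoc, ← mul_pow]
    simp
  set D : ℝ[X] := derivative P with hD
  have hcard1 : n ≤ Multiset.card D.roots := by
    have := P.card_roots_le_derivative
    rw [hroots, Multiset.card_map, hs, ← hD] at this
    omega
  have hDdeg_le : D.natDegree ≤ n := by
    have := natDegree_derivative_le P
    rw [← hD, hdeg] at this
    omega
  have hcard2 : Multiset.card D.roots ≤ D.natDegree := card_roots' D
  have hDdeg : D.natDegree = n := le_antisymm hDdeg_le (le_trans hcard1 hcard2)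
  have hcard : Multiset.card D.roots = D.natDegree := le_antisymm hcard2 (hDdeg ▸ hcard1)
  have hlead : D.leadingCoeff = (n : ℝ) + 1 := by
    rw [leadingCoeff, hDdeg, hD, coeff_derivative, hcoeff (n + 1) le_rfl]
    simp [Multiset.esymm]
  refine ⟨D.roots.map Neg.neg, by rw [Multiset.card_map, hcard, hDdeg], ?_⟩
  intro r hr
  have h1 : D.coeff (n - r) = D.leadingCoeff * (-1) ^ r * D.roots.esymm r := by
    have := Polynomial.coeff_eq_esymm_roots_of_card hcard
      (k := n - r) (by omega)
    rwa [hDdeg, show n - (n - r) = r by omega] at this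
  have h2 : D.coeff (n - r) = s.esymm r * ((n : ℝ) - r + 1) := by
    rw [hD, coeff_derivative, hcoeff (n - r + 1) (by omega),
      show n + 1 - (n - r + 1) = r by omega]
    push_cast [Nat.cast_sub hr]
    ring
  have h4 := h1.symm.trans h2
  rw [hlead] at h4
  rw [Multiset.esymm_neg]
  rcases Nat.even_or_odd r with he | he
  · rw [he.neg_one_pow] at h4 ⊢
    linear_combination h4
  · rw [he.neg_one_pow] at h4 ⊢
    linear_combination h4

lemma reduce_aux : ∀ (n : ℕ) (s : Multiset ℝ), Multiset.card s = n → ∀ m, m ≤ n →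
    ∃ t : Multiset ℝ, Multiset.card t = m ∧
      ∀ r, r ≤ m → (m.choose r : ℝ) * s.esymm r = (n.choose r : ℝ) * t.esymm r := by
  intro n
  induction n with
  | zero =>
    intro s hs m hm
    have hm0 : m = 0 := by omega
    subst hm0
    exact ⟨s, hs, fun r _ => rfl⟩
  | succ n ih =>
    intro s hs m hm
    rcases eq_or_lt_of_le hm with rfl | hm'
    · exact ⟨s, hs, fun r _ => rfl⟩
    · have hm2 : m ≤ n := by omega
      obtain ⟨s', hs', hstep⟩ := step_aux s n hs
      obtain ⟨t, ht, hrel⟩ := ih s' hs' m hm2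
      refine ⟨t, ht, fun r hr => ?_⟩
      have h1 := hstep r (le_trans hr hm2)
      have h2 := hrel r hr
      have key : (((n+1).choose r : ℕ) : ℝ) * ((n : ℝ) + 1 - r) = ((n : ℝ) + 1) * (n.choose r : ℝ) := by
        have h := Nat.choose_mul_succ_eq n r
        have h' : ((n.choose r * (n+1) : ℕ) : ℝ) = (((n+1).choose r * (n+1-r) : ℕ) : ℝ) := by
          exact_mod_cast congrArg (fun x : ℕ => (x : ℝ)) h
        push_cast [Nat.cast_sub (show r ≤ n+1 by omega)] at h'
        linarith
      have hpos : (0:ℝ) < (n : ℝ) + 1 - r := by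
        have : (r : ℝ) ≤ n := Nat.cast_le.2 (le_trans hr hm2)
        linarith
      apply mul_left_cancel₀ (ne_of_gt hpos)
      push_cast
      linear_combination (-(m.choose r : ℝ)) * h1 + ((n : ℝ) + 1) * h2 + (-(t.esymm r)) * key

lemma exists_fn (t : Multiset ℝ) (m : ℕ) (h : Multiset.card t = m) :
    ∃ f : Fin m → ℝ, ∀ r, Sv r f = t.esymm r := by
  obtain ⟨l, rfl⟩ := Quotient.exists_rep t
  have hl : l.length = m := h
  subst hl
  refine ⟨l.get, fun r => ?_⟩
  rw [Sv_esymm]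
  congr 1
  rw [Fin.univ_val_map]
  exact congrArg _ (List.ofFn_get l)

lemma sq_sum_id {ι : Type*} [DecidableEq ι] (s : Finset ι) (f : ι → ℝ) :
    (∑ i ∈ s, f i) ^ 2 = (∑ i ∈ s, f i ^ 2) + 2 * ∑ u ∈ s.powersetCard 2, ∏ i ∈ u, f i := by
  induction s using Finset.induction_on with
  | empty =>
    rw [show (∅ : Finset ι).powersetCard 2 = ∅ from Finset.powersetCard_eq_empty.2 (by simp)]
    simp
  | @insert a s ha ih =>
    rw [Finset.sum_insert ha, Finset.sum_insert ha,
      Finset.powersetCard_succ_insert ha, Finset.sum_union, Finset.sum_image]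
    · have h1 : ∑ u ∈ s.powersetCard 1, ∏ i ∈ insert a u, f i = f a * ∑ i ∈ s, f i := by
        rw [Finset.mul_sum, Finset.powersetCard_one, Finset.sum_map]
        refine Finset.sum_congr rfl fun i hi => ?_
        have hai : a ∉ ({i} : Finset ι) := by
          simp only [Finset.mem_singleton]
          rintro rfl; exact ha hi
        simp only [Function.Embedding.coeFn_mk]
        rw [Finset.prod_insert hai, Finset.prod_singleton]
      rw [h1]
      linear_combination ih
    · intro u hu v hv huv
      have hau : a ∉ u := fun hx => ha ((Finset.mem_powersetCard.1 hu).1 hx)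
      have hav : a ∉ v := fun hx => ha ((Finset.mem_powersetCard.1 hv).1 hx)
      rw [← Finset.erase_insert hau, ← Finset.erase_insert hav, huv]
    · rw [Finset.disjoint_left]
      intro u hu hu2
      obtain ⟨v, hv, rfl⟩ := Finset.mem_image.1 hu2
      exact ha ((Finset.mem_powersetCard.1 hu).1 (Finset.mem_insert_self a v))

lemma Sv_compl {m : ℕ} (j : ℕ) (hj : j ≤ m) (t : Fin m → ℝ) (h0 : ∀ i, t i ≠ 0) :
    Sv (m - j) t = (∏ i, t i) * Sv j (fun i => (t i)⁻¹) := by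
  rw [Sv, Sv, Finset.mul_sum]
  refine Finset.sum_nbij' (i := fun v => vᶜ) (j := fun u => uᶜ) ?_ ?_ ?_ ?_ ?_
  · intro v hv
    rw [Finset.mem_powersetCard_univ] at hv ⊢
    rw [Finset.card_compl, hv, Fintype.card_fin]
    omega
  · intro u hu
    rw [Finset.mem_powersetCard_univ] at hu ⊢
    rw [Finset.card_compl, hu, Fintype.card_fin]
  · intro v _; exact compl_compl v
  · intro u _; exact compl_compl u
  · intro v hv
    have hsplit : (∏ i ∈ v, t i) * ∏ i ∈ vᶜ, t i = ∏ i, t i :=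
      Finset.prod_mul_prod_compl v t
    have hne : (∏ i ∈ vᶜ, t i) ≠ 0 := Finset.prod_ne_zero_iff.2 fun i _ => h0 i
    simp only [Finset.prod_inv_distrib]
    field_simp
    linear_combination hsplit

lemma newton_base (j : ℕ) (t : Fin (j+2) → ℝ) :
    ((j+2).choose (j+1) : ℝ) ^ 2 * Sv j t * Sv (j+2) t
      ≤ ((j+2).choose j : ℝ) * Sv (j+1) t ^ 2 := by
  have hc1 : (((j+2).choose (j+1) : ℕ) : ℝ) = (j : ℝ) + 2 := by
    rw [show j + 2 = (j+1)+1 from rfl, Nat.choose_succ_self_right]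
    push_cast; ring
  have hc2n : 2 * ((j+2).choose j) = (j+2) * (j+1) := by
    have hsymm : (j+2).choose j = (j+2).choose 2 := by
      have := Nat.choose_symm (show 2 ≤ j + 2 by omega)
      simpa using this
    rw [hsymm, Nat.choose_two_right]
    have he : 2 ∣ (j+2) * (j+1) := by
      rcases Nat.even_or_odd j with ⟨c, hc⟩ | ⟨c, hc⟩
      · exact Dvd.dvd.mul_right ⟨c+1, by omega⟩ _
      · exact Dvd.dvd.mul_left ⟨c+1, by omega⟩ _
    rw [show j + 2 - 1 = j + 1 from rfl]
    exact Nat.mul_div_cancel' he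
  have hc2 : (((j+2).choose j : ℕ) : ℝ) = ((j:ℝ)+2) * ((j:ℝ)+1) / 2 := by
    have := congrArg (Nat.cast : ℕ → ℝ) hc2n
    push_cast at this
    linarith
  by_cases h0 : ∀ i, t i ≠ 0
  · set ν : Fin (j+2) → ℝ := fun i => (t i)⁻¹ with hν
    have hj2 : Sv (j+2) t = ∏ i, t i := Sv_top t
    have hj1 : Sv (j+1) t = (∏ i, t i) * Sv 1 ν := by
      have := Sv_compl (m := j+2) 1 (by omega) t h0
      rwa [show j+2-1 = j+1 from rfl] at this
    have hj0 : Sv j t = (∏ i, t i) * Sv 2 ν := by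
      have := Sv_compl (m := j+2) 2 (by omega) t h0
      rwa [show j+2-2 = j from rfl] at this
    have hid : (∑ i, ν i) ^ 2 = (∑ i, ν i ^ 2) + 2 * Sv 2 ν := by
      have := sq_sum_id (Finset.univ : Finset (Fin (j+2))) ν
      rw [this]; rfl
    have hcs : (∑ i, ν i) ^ 2 ≤ ((j:ℝ)+2) * ∑ i, ν i ^ 2 := by
      have := sq_sum_le_card_mul_sum_sq (s := (Finset.univ : Finset (Fin (j+2)))) (f := ν)
      simpa using this
    have scalar : ((j:ℝ)+2)^2 * Sv 2 ν ≤ ((j:ℝ)+2) * ((j:ℝ)+1) / 2 * (Sv 1 ν)^2 := by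
      rw [Sv_one]
      nlinarith [hcs, hid]
    rw [hc1, hc2, hj2, hj1, hj0]
    nlinarith [mul_le_mul_of_nonneg_right scalar (sq_nonneg (∏ i, t i))]
  · push_neg at h0
    obtain ⟨i, hi⟩ := h0
    have hz : Sv (j+2) t = 0 := by
      rw [Sv_top]
      exact Finset.prod_eq_zero (Finset.mem_univ i) hi
    rw [hz, mul_zero]
    positivity

lemma newton {n : ℕ} (j : ℕ) (hj : j + 2 ≤ n) (lam : Fin n → ℝ) :
    (n.choose (j+1) : ℝ) ^ 2 * Sv j lam * Sv (j+2) lam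
      ≤ (n.choose j : ℝ) * (n.choose (j+2) : ℝ) * Sv (j+1) lam ^ 2 := by
  set s : Multiset ℝ := Finset.univ.val.map lam with hsdef
  have hcard : Multiset.card s = n := by
    rw [hsdef, Multiset.card_map]
    simp
  obtain ⟨t, ht, hrel⟩ := reduce_aux n s hcard (j+2) hj
  obtain ⟨f, hf⟩ := exists_fn t (j+2) ht
  have A : ∀ r, r ≤ j + 2 → ((j+2).choose r : ℝ) * Sv r lam = (n.choose r : ℝ) * Sv r f := by
    intro r hr
    rw [Sv_esymm r lam, hf r]
    exact hrel r hr
  have hcn : ∀ i, i ≤ n → (0:ℝ) < (n.choose i : ℝ) := by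
    intro i hi; exact_mod_cast Nat.choose_pos hi
  have hc2 : ∀ i, i ≤ j + 2 → (0:ℝ) < ((j+2).choose i : ℝ) := by
    intro i hi; exact_mod_cast Nat.choose_pos hi
  have hn0 := hcn j (by omega)
  have hn1 := hcn (j+1) (by omega)
  have hn2 := hcn (j+2) hj
  have hb0 := hc2 j (by omega)
  have hb1 := hc2 (j+1) (by omega)
  have hb2 := hc2 (j+2) le_rfl
  have hf0 : Sv j f = ((j+2).choose j : ℝ) * Sv j lam / (n.choose j : ℝ) := by
    rw [eq_div_iff (ne_of_gt hn0)]
    linear_combination -(A j (by omega))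
  have hf1 : Sv (j+1) f = ((j+2).choose (j+1) : ℝ) * Sv (j+1) lam / (n.choose (j+1) : ℝ) := by
    rw [eq_div_iff (ne_of_gt hn1)]
    linear_combination -(A (j+1) (by omega))
  have hf2 : Sv (j+2) f = ((j+2).choose (j+2) : ℝ) * Sv (j+2) lam / (n.choose (j+2) : ℝ) := by
    rw [eq_div_iff (ne_of_gt hn2)]
    linear_combination -(A (j+2) le_rfl)
  have base := newton_base j f
  rw [hf0, hf1, hf2] at base
  set C := ((j+2).choose j : ℝ) * ((j+2).choose (j+1) : ℝ)^2 * ((j+2).choose (j+2) : ℝ) with hC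
  have hCpos : 0 < C := by positivity
  have hKpos : (0:ℝ) < (n.choose j : ℝ) * (n.choose (j+1) : ℝ)^2 * (n.choose (j+2) : ℝ) := by
    positivity
  have key := mul_le_mul_of_nonneg_left base (le_of_lt hKpos)
  have e1 : (n.choose j : ℝ) * (n.choose (j+1) : ℝ)^2 * (n.choose (j+2) : ℝ) *
      (((j+2).choose (j+1) : ℝ) ^ 2 * (((j+2).choose j : ℝ) * Sv j lam / (n.choose j : ℝ)) *
        (((j+2).choose (j+2) : ℝ) * Sv (j+2) lam / (n.choose (j+2) : ℝ)))
      = C * ((n.choose (j+1) : ℝ) ^ 2 * Sv j lam * Sv (j+2) lam) := by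
    rw [hC]; field_simp
  have e2 : (n.choose j : ℝ) * (n.choose (j+1) : ℝ)^2 * (n.choose (j+2) : ℝ) *
      (((j+2).choose j : ℝ) * (((j+2).choose (j+1) : ℝ) * Sv (j+1) lam / (n.choose (j+1) : ℝ)) ^ 2)
      = C * ((n.choose j : ℝ) * (n.choose (j+2) : ℝ) * Sv (j+1) lam ^ 2) := by
    rw [hC]; field_simp; simp [Nat.choose_self]
  rw [e1, e2] at key
  exact le_of_mul_le_mul_left key hCpos

/-- main two inequalities (A) and (B) -/
lemma key_AB {n : ℕ} (k l : ℕ) (lam : Fin n → ℝ)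
    (hS : ∀ i, i ≤ k → 0 < Sv i lam) (hlk : l < k) (hkn : k ≤ n)
    (hx : Sv k lam * (n.choose l : ℝ) = (n.choose k : ℝ) * Sv l lam) :
    (((k:ℝ)+1) * Sv (k+1) lam ≤ ((n:ℝ) - (k:ℝ)) * Sv k lam) ∧
    (((n:ℝ) - (l:ℝ)) * Sv l lam ≤ ((l:ℝ)+1) * Sv (l+1) lam) := by
  have hcn : ∀ i, i ≤ n → (0:ℝ) < (n.choose i : ℝ) := by
    intro i hi; exact_mod_cast Nat.choose_pos hi
  set p : ℕ → ℝ := fun i => Sv i lam / (n.choose i : ℝ) with hpdef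
  set q : ℕ → ℝ := fun j => p (j+1) / p j with hqdef
  have hp : ∀ i, i ≤ k → 0 < p i := fun i hi =>
    div_pos (hS i hi) (hcn i (le_trans hi hkn))
  have hpq : ∀ j, j + 1 ≤ k → q j * p j = p (j+1) := by
    intro j hj
    exact div_mul_cancel₀ _ (ne_of_gt (hp j (by omega)))
  have hpk_pl : p k = p l := by
    rw [hpdef]
    rw [div_eq_div_iff (ne_of_gt (hcn k hkn)) (ne_of_gt (hcn l (by omega)))]
    linear_combination hx
  -- Newton in p-form
  have newton_p : ∀ j, j + 2 ≤ n → p j * p (j+2) ≤ p (j+1) ^ 2 := by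
    intro j hj
    have hN := newton j hj lam
    rw [hpdef]
    rw [div_mul_div_comm, div_pow, div_le_div_iff₀
      (mul_pos (hcn j (by omega)) (hcn (j+2) hj)) (pow_pos (hcn (j+1) (by omega)) 2)]
    nlinarith [hN, sq_nonneg ((n.choose (j+1) : ℝ))]
  -- ratio steps
  have hq_step : ∀ j, j + 2 ≤ k → q (j+1) ≤ q j := by
    intro j hj
    have h0 := hp j (by omega)
    have h1 := hp (j+1) (by omega)
    have h2 := hp (j+2) hj
    rw [hqdef]
    rw [div_le_div_iff₀ h1 h0]
    nlinarith [newton_p j (by omega)]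
  have hq_mono : ∀ a b, a ≤ b → b + 1 ≤ k → q b ≤ q a := by
    intro a b hab
    induction b, hab using Nat.le_induction with
    | base => intro _; exact le_rfl
    | succ b hb ih =>
      intro hbk
      exact le_trans (hq_step b hbk) (ih (by omega))
  obtain ⟨m, rfl⟩ : ∃ m, k = m + 1 := ⟨k - 1, by omega⟩
  have hlm : l ≤ m := by omega
  -- (B) : 1 ≤ q l
  have hBq : 1 ≤ q l := by
    by_contra hcon
    push_neg at hcon
    have chain : ∀ j, l + 1 ≤ j → j ≤ m + 1 → p j ≤ p (l+1) := by
      intro j hj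
      induction j, hj using Nat.le_induction with
      | base => intro _; exact le_rfl
      | succ j hj ih =>
        intro hjk
        have hjm : j ≤ m := by omega
        have hqj : q j ≤ q l := hq_mono l j (by omega) (by omega)
        have hpj := hp j (by omega)
        calc p (j+1) = q j * p j := (hpq j (by omega)).symm
          _ ≤ q l * p j := mul_le_mul_of_nonneg_right hqj (le_of_lt hpj)
          _ ≤ 1 * p j := mul_le_mul_of_nonneg_right (le_of_lt hcon) (le_of_lt hpj)
          _ = p j := one_mul _
          _ ≤ p (l+1) := ih (by omega)
    have h1 : p (m+1) ≤ p (l+1) := chain (m+1) (by omega) le_rfl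
    have h2 : p (l+1) < p l := by
      have := hpq l (by omega)
      nlinarith [hp l (by omega), this]
    rw [hpk_pl] at h1
    linarith
  -- q m ≤ 1
  have hAq : q m ≤ 1 := by
    by_contra hcon
    push_neg at hcon
    have chain : ∀ j, l + 1 ≤ j → j ≤ m + 1 → p (l+1) ≤ p j := by
      intro j hj
      induction j, hj using Nat.le_induction with
      | base => intro _; exact le_rfl
      | succ j hj ih =>
        intro hjk
        have hjm : j ≤ m := by omega
        have hqj : q m ≤ q j := hq_mono j m hjm (by omega)
        have hpj := hp j (by omega)
        calc p (l+1) ≤ p j := ih (by omega)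
          _ = 1 * p j := (one_mul _).symm
          _ ≤ q m * p j := mul_le_mul_of_nonneg_right (le_of_lt hcon) (le_of_lt hpj)
          _ ≤ q j * p j := mul_le_mul_of_nonneg_right hqj (le_of_lt hpj)
          _ = p (j+1) := hpq j (by omega)
    have h1 : p (l+1) ≤ p (m+1) := chain (m+1) (by omega) le_rfl
    have h2 : p l < p (l+1) := by
      have heq := hpq l (by omega)
      have hql : q m ≤ q l := hq_mono l m hlm (by omega)
      nlinarith [hp l (by omega)]
    rw [hpk_pl] at *
    linarith
  -- translate (B)
  have hB : ((n:ℝ) - (l:ℝ)) * Sv l lam ≤ ((l:ℝ)+1) * Sv (l+1) lam := by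
    have hpl : p l ≤ p (l+1) := by
      have heq := hpq l (by omega)
      nlinarith [hp l (by omega)]
    have hl1n : l + 1 ≤ n := by omega
    have hple : Sv l lam * (n.choose (l+1) : ℝ) ≤ Sv (l+1) lam * (n.choose l : ℝ) := by
      rw [hpdef] at hpl
      rw [div_le_div_iff₀ (hcn l (by omega)) (hcn (l+1) hl1n)] at hpl
      linarith
    have hid : (n.choose (l+1) : ℝ) * ((l:ℝ)+1) = (n.choose l : ℝ) * ((n:ℝ) - l) := by
      have h := Nat.choose_succ_right_eq n l
      have h' : ((n.choose (l+1) * (l+1) : ℕ) : ℝ) = ((n.choose l * (n - l) : ℕ) : ℝ) := by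
        exact_mod_cast congrArg (fun x : ℕ => (x : ℝ)) h
      push_cast [Nat.cast_sub (show l ≤ n by omega)] at h'
      linarith
    have hfin := mul_le_mul_of_nonneg_left hple (show (0:ℝ) ≤ (l:ℝ)+1 by positivity)
    apply le_of_mul_le_mul_right _ (hcn l (by omega))
    nlinarith [hfin, mul_le_mul_of_nonneg_left hid.le (le_of_lt (hS l (by omega))),
      mul_le_mul_of_nonneg_left hid.ge (le_of_lt (hS l (by omega)))]
  refine ⟨?_, hB⟩
  -- translate (A)
  rcases eq_or_lt_of_le hkn with rfl | hkn'
  · rw [Sv_eq_zero (by omega) lam]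
    simp
  · -- m + 2 ≤ n
    have hm2 : m + 2 ≤ n := by omega
    have hpm : p (m+1) ≤ p m := by
      have heq := hpq m (by omega)
      nlinarith [hp m (by omega)]
    have hpk1 : p (m+2) ≤ p (m+1) := by
      have hN := newton_p m hm2
      nlinarith [hp m (by omega), hp (m+1) (by omega)]
    have hple : Sv (m+2) lam * (n.choose (m+1) : ℝ) ≤ Sv (m+1) lam * (n.choose (m+2) : ℝ) := by
      rw [hpdef] at hpk1
      rw [div_le_div_iff₀ (hcn (m+2) hm2) (hcn (m+1) (by omega))] at hpk1
      linarith
    have hid : (n.choose (m+2) : ℝ) * ((m:ℝ)+1+1) = (n.choose (m+1) : ℝ) * ((n:ℝ) - (m+1)) := by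
      have h := Nat.choose_succ_right_eq n (m+1)
      have h' : ((n.choose (m+2) * (m+2) : ℕ) : ℝ) = ((n.choose (m+1) * (n - (m+1)) : ℕ) : ℝ) := by
        exact_mod_cast congrArg (fun x : ℕ => (x : ℝ)) h
      push_cast [Nat.cast_sub (show m + 1 ≤ n by omega)] at h'
      linarith
    have hfin := mul_le_mul_of_nonneg_left hple (show (0:ℝ) ≤ (m:ℝ)+1+1 by positivity)
    apply le_of_mul_le_mul_right _ (hcn (m+1) (by omega))
    push_cast
    nlinarith [hfin, mul_le_mul_of_nonneg_left hid.le (le_of_lt (hS (m+1) le_rfl)),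
      mul_le_mul_of_nonneg_left hid.ge (le_of_lt (hS (m+1) le_rfl))]

/-- Under `S_k/S_l = C(n,k)/C(n,l)` on the Garding cone, with
`M = C(n,l)(n−k)S_k − C(n,k)(n−l)S_l` and
`Q = C(n,l)(k+1)S_{k+1} − C(n,k)(l+1)S_{l+1}`, one has `M < 0` and `M − Q ≥ 0`. -/
theorem stmt_16 {n : ℕ} (k l : ℕ) (lam : Fin n → ℝ)
    (hGamma : ∀ i, 1 ≤ i → i ≤ k → 0 < Sv i lam)
    (hlk : l < k) (hkn : k ≤ n)
    (hquot : Sv k lam / Sv l lam = (n.choose k : ℝ) / (n.choose l : ℝ)) :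
    (n.choose l : ℝ) * ((n : ℝ) - (k : ℝ)) * Sv k lam
        - (n.choose k : ℝ) * ((n : ℝ) - (l : ℝ)) * Sv l lam < 0
    ∧ ((n.choose l : ℝ) * ((n : ℝ) - (k : ℝ)) * Sv k lam
          - (n.choose k : ℝ) * ((n : ℝ) - (l : ℝ)) * Sv l lam)
        - ((n.choose l : ℝ) * ((k : ℝ) + 1) * Sv (k + 1) lam
          - (n.choose k : ℝ) * ((l : ℝ) + 1) * Sv (l + 1) lam) ≥ 0 := by
  have hS : ∀ i, i ≤ k → 0 < Sv i lam := by
    intro i hi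
    rcases Nat.eq_zero_or_pos i with rfl | hpos
    · rw [Sv_zero]; norm_num
    · exact hGamma i hpos hi
  have hcn : ∀ i, i ≤ n → (0:ℝ) < (n.choose i : ℝ) := by
    intro i hi; exact_mod_cast Nat.choose_pos hi
  have hck := hcn k hkn
  have hcl := hcn l (by omega)
  have hx : Sv k lam * (n.choose l : ℝ) = (n.choose k : ℝ) * Sv l lam := by
    rw [div_eq_div_iff (ne_of_gt (hS l (by omega))) (ne_of_gt hcl)] at hquot
    linarith
  obtain ⟨hA, hB⟩ := key_AB k l lam hS hlk hkn hx
  constructor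
  · have h1 : (n.choose l : ℝ) * ((n:ℝ) - k) * Sv k lam
        = (n.choose k : ℝ) * ((n:ℝ) - k) * Sv l lam := by
      linear_combination ((n:ℝ) - k) * hx
    rw [h1]
    have hkl : (l:ℝ) < (k:ℝ) := by exact_mod_cast hlk
    nlinarith [mul_pos hck (hS l (by omega))]
  · nlinarith [mul_nonneg (le_of_lt hcl) (sub_nonneg.2 hA),
      mul_nonneg (le_of_lt hck) (sub_nonneg.2 hB)]
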